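/- For frequency-selective channels, an optimal SAPD solution must use maximum power for every user. Precisely: let p_1,…,p_n be measurable bounded PSDs on [0,W] with ∫_0^W p_i ≤ P_i for every i, and suppose there is a user k with ∫_0^W p_k(x) dx < P_k. Then there exist measurable PSDs q_1,…,q_n : [0,W] → [0,∞) with ∫_0^W q_i ≤ P_i for every i such that the weighted sum of capacities strictly increases: Σ_i ω_i C_i(q) > Σ_i ω_i C_i(p). -/

import Mathlib

open MeasureTheory Real

noncomputable def capacity {n : ℕ} (W : ℝ) (h : Fin n → Fin n → ℝ → ℝ)
    (N : Fin n → ℝ) (p : Fin n → ℝ → ℝ) (i : Fin n) : ℝ :=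
  ∫ x in (0:ℝ)..W,
    Real.log (1 + p i x * h i i x /
      ((∑ j ∈ Finset.univ.erase i, p j x * h j i x) + N i))

/-- The integrand in the capacity. -/
noncomputable def itg {n : ℕ} (h : Fin n → Fin n → ℝ → ℝ) (N : Fin n → ℝ)
    (r : Fin n → ℝ → ℝ) (i : Fin n) (x : ℝ) : ℝ :=
  Real.log (1 + r i x * h i i x /
      ((∑ j ∈ Finset.univ.erase i, r j x * h j i x) + N i))

lemma capacity_eq {n : ℕ} {W : ℝ} (hW : 0 ≤ W) (h : Fin n → Fin n → ℝ → ℝ)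
    (N : Fin n → ℝ) (r : Fin n → ℝ → ℝ) (i : Fin n) :
    capacity W h N r i = ∫ x in Set.Ioc (0:ℝ) W, itg h N r i x := by
  rw [capacity, intervalIntegral.integral_of_le hW]; rfl

lemma itg_meas {n : ℕ} {h : Fin n → Fin n → ℝ → ℝ} {N : Fin n → ℝ}
    {r : Fin n → ℝ → ℝ} (hmeas : ∀ j i, Measurable (h j i))
    (hrmeas : ∀ i, Measurable (r i)) (i : Fin n) :
    Measurable (itg h N r i) := by
  apply Measurable.log
  apply Measurable.add measurable_const
  exact ((hrmeas i).mul (hmeas i i)).div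
    ((Finset.measurable_sum _ fun j _ => (hrmeas j).mul (hmeas j i)).add measurable_const)

lemma itg_nonneg {n : ℕ} {h : Fin n → Fin n → ℝ → ℝ} {N : Fin n → ℝ}
    {r : Fin n → ℝ → ℝ} (hnn : ∀ j i x, 0 ≤ h j i x) (hN : ∀ i, 0 < N i)
    (hrnn : ∀ i x, 0 ≤ r i x) (i : Fin n) (x : ℝ) :
    0 ≤ itg h N r i x := by
  have hden : 0 < (∑ j ∈ Finset.univ.erase i, r j x * h j i x) + N i := by
    have : 0 ≤ ∑ j ∈ Finset.univ.erase i, r j x * h j i x :=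
      Finset.sum_nonneg fun j _ => mul_nonneg (hrnn j x) (hnn j i x)
    linarith [hN i]
  apply Real.log_nonneg
  have : 0 ≤ r i x * h i i x / ((∑ j ∈ Finset.univ.erase i, r j x * h j i x) + N i) :=
    div_nonneg (mul_nonneg (hrnn i x) (hnn i i x)) hden.le
  linarith

lemma itg_le {n : ℕ} {h : Fin n → Fin n → ℝ → ℝ} {N : Fin n → ℝ}
    {r : Fin n → ℝ → ℝ} {hmax : ℝ} (hnn : ∀ j i x, 0 ≤ h j i x) (hN : ∀ i, 0 < N i)
    (hrnn : ∀ i x, 0 ≤ r i x) (hhbd : ∀ i x, h i i x ≤ hmax)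
    {B : ℝ} (i : Fin n) (hrB : ∀ x, r i x ≤ B) (x : ℝ) :
    itg h N r i x ≤ Real.log (1 + B * hmax / N i) := by
  have hsum : 0 ≤ ∑ j ∈ Finset.univ.erase i, r j x * h j i x :=
    Finset.sum_nonneg fun j _ => mul_nonneg (hrnn j x) (hnn j i x)
  have hB : 0 ≤ B := le_trans (hrnn i x) (hrB x)
  have hden : 0 < (∑ j ∈ Finset.univ.erase i, r j x * h j i x) + N i := by linarith [hN i]
  have hnum : r i x * h i i x ≤ B * hmax :=
    mul_le_mul (hrB x) (hhbd i x) (hnn i i x) hB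
  have hdiv : r i x * h i i x / ((∑ j ∈ Finset.univ.erase i, r j x * h j i x) + N i)
      ≤ B * hmax / N i :=
    div_le_div₀ (mul_nonneg hB (le_trans (hnn i i x) (hhbd i x))) hnum (hN i)
      (by linarith)
  apply Real.log_le_log
  · have : 0 ≤ r i x * h i i x / ((∑ j ∈ Finset.univ.erase i, r j x * h j i x) + N i) :=
      div_nonneg (mul_nonneg (hrnn i x) (hnn i i x)) hden.le
    linarith
  · linarith

lemma itg_integrableOn {n : ℕ} {W : ℝ} {h : Fin n → Fin n → ℝ → ℝ} {N : Fin n → ℝ}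
    {r : Fin n → ℝ → ℝ} {hmax : ℝ} (hmeas : ∀ j i, Measurable (h j i))
    (hnn : ∀ j i x, 0 ≤ h j i x) (hN : ∀ i, 0 < N i)
    (hrmeas : ∀ i, Measurable (r i)) (hrnn : ∀ i x, 0 ≤ r i x)
    (hhbd : ∀ i x, h i i x ≤ hmax)
    {B : ℝ} (i : Fin n) (hrB : ∀ x, r i x ≤ B) :
    IntegrableOn (itg h N r i) (Set.Ioc (0:ℝ) W) := by
  apply Measure.integrableOn_of_bounded (M := Real.log (1 + B * hmax / N i))
  · simp [Real.volume_Ioc]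
  · exact (itg_meas hmeas hrmeas i).aestronglyMeasurable
  · apply ae_of_all
    intro x
    rw [Real.norm_eq_abs, abs_of_nonneg (itg_nonneg hnn hN hrnn i x)]
    exact itg_le hnn hN hrnn hhbd i hrB x

lemma exists_small_subset {W r : ℝ} (hW : 0 < W) (hr : 0 < r) {A : Set ℝ}
    (hA : MeasurableSet A) (hAsub : A ⊆ Set.Ioc 0 W) (hApos : 0 < volume A) :
    ∃ S : Set ℝ, S ⊆ A ∧ MeasurableSet S ∧ 0 < volume S ∧
      volume S ≤ ENNReal.ofReal r := by
  obtain ⟨K, hK⟩ := exists_nat_gt (W / r)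
  have hK0 : 0 < (K : ℝ) := lt_trans (div_pos hW hr) hK
  set c : ℝ := W / K with hc
  have hc0 : 0 < c := div_pos hW hK0
  have hcr : c ≤ r := by
    rw [hc, div_le_iff₀ hK0]
    nlinarith [(div_lt_iff₀ hr).mp hK]
  have hKc : (K : ℝ) * c = W := by rw [hc, mul_div_assoc']; exact mul_div_cancel_left₀ W hK0.ne'
  set I : ℕ → Set ℝ := fun j => Set.Ioc ((j : ℝ) * c) (((j : ℝ) + 1) * c) with hI
  have hcover : A ⊆ ⋃ j ∈ Finset.range K, I j := by
    intro x hx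
    obtain ⟨hx0, hxW⟩ := hAsub hx
    set t : ℕ := ⌈x / c⌉₊ with ht
    have hxc : 0 < x / c := div_pos hx0 hc0
    have ht1 : 1 ≤ t := Nat.one_le_iff_ne_zero.mpr (by
      simp only [ht]
      exact Nat.ceil_pos.mpr hxc |>.ne')
    have htK : t ≤ K := Nat.ceil_le.mpr (by
      rw [div_le_iff₀ hc0]; nlinarith)
    simp only [Set.mem_iUnion, Finset.mem_range]
    refine ⟨t - 1, by omega, ?_, ?_⟩
    · have hcast : ((t - 1 : ℕ) : ℝ) = (t : ℝ) - 1 := by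
        push_cast [Nat.cast_sub ht1]; ring
      rw [hcast]
      have : (t : ℝ) < x / c + 1 := Nat.ceil_lt_add_one hxc.le
      have := (lt_div_iff₀ hc0).mp (by linarith : (t : ℝ) - 1 < x / c)
      nlinarith
    · have hcast : ((t - 1 : ℕ) : ℝ) + 1 = (t : ℝ) := by
        push_cast [Nat.cast_sub ht1]; ring
      rw [hcast]
      have : x / c ≤ (t : ℝ) := Nat.le_ceil _
      nlinarith [(div_le_iff₀ hc0).mp this]
  have hle : volume A ≤ ∑ j ∈ Finset.range K, volume (A ∩ I j) := by
    calc volume A = volume (⋃ j ∈ Finset.range K, A ∩ I j) := by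
          rw [← Set.inter_iUnion₂]
          rw [Set.inter_eq_left.mpr hcover]
      _ ≤ ∑ j ∈ Finset.range K, volume (A ∩ I j) := measure_biUnion_finset_le _ _
  have : ∃ j ∈ Finset.range K, 0 < volume (A ∩ I j) := by
    by_contra hcon
    push_neg at hcon
    have : ∑ j ∈ Finset.range K, volume (A ∩ I j) = 0 :=
      Finset.sum_eq_zero fun j hj => le_antisymm (hcon j hj) zero_le
    rw [this] at hle
    exact absurd (le_antisymm hle zero_le) hApos.ne'
  obtain ⟨j, _, hj⟩ := this
  refine ⟨A ∩ I j, Set.inter_subset_left, hA.inter measurableSet_Ioc, hj, ?_⟩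
  calc volume (A ∩ I j) ≤ volume (I j) := measure_mono Set.inter_subset_right
    _ = ENNReal.ofReal c := by rw [hI]; simp [Real.volume_Ioc]; ring_nf
    _ ≤ ENNReal.ofReal r := ENNReal.ofReal_le_ofReal hcr

set_option maxHeartbeats 1000000 in
theorem max_power_weighted_sum {n : ℕ} (W : ℝ) (hW : 0 < W)
    (h : Fin n → Fin n → ℝ → ℝ)
    (hmeas : ∀ j i, Measurable (h j i))
    (hnn : ∀ j i x, 0 ≤ h j i x)
    (N P ω : Fin n → ℝ)
    (hN : ∀ i, 0 < N i) (hP : ∀ i, 0 < P i) (hω : ∀ i, 0 < ω i)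
    (pmax hmax hmin : ℝ)
    (p : Fin n → ℝ → ℝ)
    (hpmeas : ∀ i, Measurable (p i))
    (hpnn : ∀ i x, 0 ≤ p i x)
    (hpbd : ∀ i x, p i x ≤ pmax)
    (hhbd : ∀ i x, h i i x ≤ hmax)
    (hph : 0 < pmax * hmax)
    (k : Fin n)
    (hhmin : 0 < hmin)
    (hkmin : ∀ x ∈ Set.Icc (0:ℝ) W, hmin ≤ h k k x)
    (hfeas : ∀ i, (∫ x in (0:ℝ)..W, p i x) ≤ P i)
    (hslack : (∫ x in (0:ℝ)..W, p k x) < P k) :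
    ∃ q : Fin n → ℝ → ℝ,
      (∀ i, Measurable (q i)) ∧
      (∀ i x, 0 ≤ q i x) ∧
      (∀ i, (∫ x in (0:ℝ)..W, q i x) ≤ P i) ∧
      ∑ i, ω i * capacity W h N q i > ∑ i, ω i * capacity W h N p i := by
  classical
  have hW0 : (0:ℝ) ≤ W := hW.le
  set E : Set ℝ := Set.Ioc (0:ℝ) W with hE
  have hEvol : volume E = ENNReal.ofReal W := by simp [hE, Real.volume_Ioc]
  have hEfin : volume E ≠ ⊤ := by rw [hEvol]; exact ENNReal.ofReal_ne_top
  have hmax_pos : 0 < hmax :=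
    lt_of_lt_of_le hhmin (le_trans (hkmin 0 ⟨le_rfl, hW0⟩) (hhbd k 0))
  have hpmax_pos : 0 < pmax := by nlinarith
  -- the interference-plus-noise density at receiver k
  set D : ℝ → ℝ := fun x => (∑ j ∈ Finset.univ.erase k, p j x * h j k x) + N k with hD
  have hDmeas : Measurable D :=
    (Finset.measurable_sum _ fun j _ => (hpmeas j).mul (hmeas j k)).add measurable_const
  -- find a bound M such that {x ∈ E | D x ≤ M} has positive measure
  have hAM : ∃ M : ℕ, 0 < volume (E ∩ D ⁻¹' Set.Iic (M:ℝ)) := by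
    have hmono : Monotone (fun M : ℕ => E ∩ D ⁻¹' Set.Iic (M:ℝ)) := by
      intro a b hab
      apply Set.inter_subset_inter_right
      apply Set.preimage_mono
      exact Set.Iic_subset_Iic.mpr (by exact_mod_cast hab)
    have hunion : (⋃ M : ℕ, E ∩ D ⁻¹' Set.Iic (M:ℝ)) = E := by
      ext x
      simp only [Set.mem_iUnion, Set.mem_inter_iff, Set.mem_preimage, Set.mem_Iic]
      constructor
      · rintro ⟨M, hM, _⟩; exact hM
      · intro hx
        obtain ⟨M, hM⟩ := exists_nat_ge (D x)
        exact ⟨M, hx, hM⟩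
    have := hmono.measure_iUnion (μ := volume)
    rw [hunion, hEvol] at this
    have hpos : (0:ENNReal) < ⨆ M : ℕ, volume (E ∩ D ⁻¹' Set.Iic (M:ℝ)) := by
      rw [← this]; exact ENNReal.ofReal_pos.mpr hW
    exact lt_iSup_iff.mp hpos
  obtain ⟨M, hMpos⟩ := hAM
  set A : Set ℝ := E ∩ D ⁻¹' Set.Iic (M:ℝ) with hA
  have hAmeas : MeasurableSet A := measurableSet_Ioc.inter (hDmeas measurableSet_Iic)
  have hAsub : A ⊆ E := Set.inter_subset_left
  -- constants
  obtain ⟨s0, hs0def⟩ : ∃ s0 : ℝ, s0 = P k - ∫ x in E, p k x := ⟨_, rfl⟩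
  have hs0 : 0 < s0 := by
    rw [hs0def, hE]
    rw [intervalIntegral.integral_of_le hW0] at hslack
    linarith
  obtain ⟨L, hL⟩ : ∃ L : ℝ, L = ∑ i ∈ Finset.univ.erase k, ω i * Real.log (1 + pmax * hmax / N i) := ⟨_, rfl⟩
  have hL0 : 0 ≤ L := hL ▸ Finset.sum_nonneg fun i _ => mul_nonneg (hω i).le
      (Real.log_nonneg (by
        have : 0 ≤ pmax * hmax / N i := div_nonneg hph.le (hN i).le
        linarith))
  obtain ⟨C0, hC0def⟩ : ∃ C0 : ℝ, C0 = (M:ℝ) + pmax * hmax := ⟨_, rfl⟩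
  have hC0 : 0 < C0 := by
    rw [hC0def]
    have : (0:ℝ) ≤ (M:ℝ) := Nat.cast_nonneg M
    linarith
  obtain ⟨δ, hδdef⟩ : ∃ δ : ℝ, δ = C0 * Real.exp (L / ω k) / hmin := ⟨_, rfl⟩
  have hδ : 0 < δ := by
    rw [hδdef]
    exact div_pos (mul_pos hC0 (Real.exp_pos _)) hhmin
  obtain ⟨g, hgdef⟩ : ∃ g : ℝ, g = Real.log (1 + δ * hmin / C0) := ⟨_, rfl⟩
  have hδhm : δ * hmin / C0 = Real.exp (L / ω k) := by
    rw [hδdef]; field_simp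
  have hgL : L < ω k * g := by
    have h1 : L / ω k < g := by
      rw [hgdef, hδhm]
      calc L / ω k = Real.log (Real.exp (L / ω k)) := (Real.log_exp _).symm
        _ < Real.log (1 + Real.exp (L / ω k)) :=
            Real.log_lt_log (Real.exp_pos _) (by linarith)
    have h0 : (L / ω k) * ω k = L := div_mul_cancel₀ _ (hω k).ne'
    have h2 := mul_lt_mul_of_pos_right h1 (hω k)
    rw [h0] at h2
    linarith [mul_comm g (ω k) ▸ h2]
  have hg0 : 0 < g := by
    rw [hgdef, hδhm]
    apply Real.log_pos
    linarith [Real.exp_pos (L / ω k)]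
  -- small subset S of A
  obtain ⟨S, hSsub, hSmeas, hSpos, hSle⟩ :=
    exists_small_subset hW (div_pos hs0 hδ) hAmeas hAsub hMpos
  have hSE : S ⊆ E := hSsub.trans hAsub
  set m : ℝ := (volume S).toReal with hm
  have hm0 : 0 < m := ENNReal.toReal_pos hSpos.ne'
    (by
      have : volume S ≤ volume E := measure_mono hSE
      rw [hEvol] at this
      exact ne_top_of_le_ne_top ENNReal.ofReal_ne_top this)
  have hmr : m ≤ s0 / δ :=
    ENNReal.toReal_le_of_le_ofReal (div_pos hs0 hδ).le hSle
  have hδm : δ * m ≤ s0 := by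
    have := mul_le_mul_of_nonneg_left hmr hδ.le
    calc δ * m ≤ δ * (s0 / δ) := this
      _ = s0 := by field_simp
  -- the improved profile
  set ind : ℝ → ℝ := S.indicator (fun _ => δ) with hind
  set q : Fin n → ℝ → ℝ := fun i x => p i x + if i = k then ind x else 0 with hq
  have hq_ne : ∀ i, i ≠ k → q i = p i := by
    intro i hi; funext x; simp [hq, hi]
  have hqk : ∀ x, q k x = p k x + ind x := by intro x; simp [hq]
  have hind_nn : ∀ x, 0 ≤ ind x := fun x => Set.indicator_nonneg (fun _ _ => hδ.le) x
  have hind_le : ∀ x, ind x ≤ δ := by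
    intro x
    rw [hind]
    by_cases hx : x ∈ S
    · rw [Set.indicator_of_mem hx]
    · rw [Set.indicator_of_notMem hx]; exact hδ.le
  have hind_meas : Measurable ind := measurable_const.indicator hSmeas
  have hqmeas : ∀ i, Measurable (q i) := by
    intro i
    by_cases hik : i = k
    · rw [hik]
      have : q k = fun x => p k x + ind x := funext hqk
      rw [this]
      exact (hpmeas k).add hind_meas
    · rw [hq_ne i hik]
      exact hpmeas i
  have hqnn : ∀ i x, 0 ≤ q i x := by
    intro i x
    by_cases hik : i = k
    · rw [hik, hqk]; have := hind_nn x; have := hpnn k x; linarith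
    · rw [hq_ne i hik]; exact hpnn i x
  have hqbd : ∀ i x, q i x ≤ pmax + δ := by
    intro i x
    by_cases hik : i = k
    · rw [hik, hqk]
      have := hind_le x; have := hpbd k x; linarith
    · rw [hq_ne i hik]
      have := hpbd i x; linarith
  -- integrals of the indicator
  have hindInt : IntegrableOn ind E := by
    rw [hind]
    apply Integrable.indicator _ hSmeas
    exact (integrableOn_const_iff).mpr (Or.inr (by rw [hEvol]; exact ENNReal.ofReal_lt_top))
  have hindVal : ∀ c : ℝ, (∫ x in E, S.indicator (fun _ => c) x) = c * m := by
    intro c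
    rw [MeasureTheory.integral_indicator hSmeas, Measure.restrict_restrict hSmeas,
      Set.inter_eq_left.mpr hSE, setIntegral_const]
    rw [hm, smul_eq_mul, mul_comm]; rfl
  have hindcInt : ∀ c : ℝ, IntegrableOn (S.indicator (fun _ => c)) E := by
    intro c
    apply Integrable.indicator _ hSmeas
    exact (integrableOn_const_iff).mpr (Or.inr (by rw [hEvol]; exact ENNReal.ofReal_lt_top))
  have hpInt : ∀ i, IntegrableOn (p i) E := by
    intro i
    apply Measure.integrableOn_of_bounded (M := pmax) hEfin (hpmeas i).aestronglyMeasurable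
    apply ae_of_all
    intro x
    rw [Real.norm_eq_abs, abs_of_nonneg (hpnn i x)]
    exact hpbd i x
  -- feasibility of q
  have hfeasq : ∀ i, (∫ x in (0:ℝ)..W, q i x) ≤ P i := by
    intro i
    by_cases hik : i = k
    · rw [hik]
      rw [intervalIntegral.integral_of_le hW0]
      have : (∫ x in E, q k x) = (∫ x in E, p k x) + ∫ x in E, ind x := by
        rw [← integral_add (hpInt k) hindInt]
        apply setIntegral_congr_fun measurableSet_Ioc
        intro x _
        exact hqk x
      rw [this]
      have : (∫ x in E, ind x) = δ * m := hindVal δ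
      rw [this]
      rw [hs0def] at hδm
      linarith [hδm]
    · rw [hq_ne i hik]; exact hfeas i
  -- the denominators at receiver k coincide for p and q
  have hden_eq : ∀ x, (∑ j ∈ Finset.univ.erase k, q j x * h j k x)
      = ∑ j ∈ Finset.univ.erase k, p j x * h j k x := by
    intro x
    apply Finset.sum_congr rfl
    intro j hj
    rw [hq_ne j (Finset.ne_of_mem_erase hj)]
  -- key pointwise gain for user k
  have hptk : ∀ x ∈ E, itg h N p k x + S.indicator (fun _ => g) x ≤ itg h N q k x := by
    intro x hxE
    by_cases hxS : x ∈ S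
    · rw [Set.indicator_of_mem hxS]
      have hxA : x ∈ A := hSsub hxS
      have hDM : D x ≤ (M:ℝ) := hxA.2
      have hDpos : 0 < D x := by
        have : 0 ≤ ∑ j ∈ Finset.univ.erase k, p j x * h j k x :=
          Finset.sum_nonneg fun j _ => mul_nonneg (hpnn j x) (hnn j k x)
        rw [hD]; dsimp only; linarith [hN k]
      have hhk : hmin ≤ h k k x := hkmin x (Set.Ioc_subset_Icc_self hxE)
      set a : ℝ := p k x * h k k x with ha
      have ha0 : 0 ≤ a := mul_nonneg (hpnn k x) (hnn k k x)
      have haM : a ≤ pmax * hmax :=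
        mul_le_mul (hpbd k x) (hhbd k x) (hnn k k x) hpmax_pos.le
      have hqkx : q k x = p k x + δ := by
        rw [hqk, hind, Set.indicator_of_mem hxS]
      have hDE : (∑ j ∈ Finset.univ.erase k, p j x * h j k x) + N k = D x := rfl
      have hδh : 0 < δ * h k k x := mul_pos hδ (lt_of_lt_of_le hhmin hhk)
      have hip : itg h N p k x = Real.log (D x + a) - Real.log (D x) := by
        rw [itg, hDE, ← ha, one_add_div hDpos.ne',
          Real.log_div (by linarith) hDpos.ne']
      have hiq : itg h N q k x = Real.log (D x + a + δ * h k k x) - Real.log (D x) := by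
        rw [itg, hden_eq x, hDE, hqkx, one_add_div hDpos.ne']
        have e2 : D x + (p k x + δ) * h k k x = D x + a + δ * h k k x := by
          rw [ha]; ring
        rw [e2, Real.log_div (by linarith) hDpos.ne']
      rw [hip, hiq, hgdef]
      have hq1 : 0 < δ * hmin / C0 := div_pos (mul_pos hδ hhmin) hC0
      have hq2 : (0:ℝ) < 1 + δ * hmin / C0 := by linarith
      have hkey : Real.log (D x + a) + Real.log (1 + δ * hmin / C0)
          ≤ Real.log (D x + a + δ * h k k x) := by
        rw [← Real.log_mul (by linarith) hq2.ne']
        apply Real.log_le_log (mul_pos (by linarith) hq2)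
        have e1 : (D x + a) * (δ * hmin / C0) ≤ C0 * (δ * hmin / C0) :=
          mul_le_mul_of_nonneg_right (by rw [hC0def]; linarith) hq1.le
        have e2 : C0 * (δ * hmin / C0) = δ * hmin := by field_simp
        have e3 : δ * hmin ≤ δ * h k k x := mul_le_mul_of_nonneg_left hhk hδ.le
        nlinarith
      linarith
    · rw [Set.indicator_of_notMem hxS]
      have hqkx : q k x = p k x := by
        rw [hqk, hind, Set.indicator_of_notMem hxS]; ring
      rw [itg, itg, hden_eq x, hqkx]
      simp
  -- key pointwise loss bound for other users
  have hpti : ∀ i, i ≠ k → ∀ x ∈ E,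
      itg h N p i x ≤ itg h N q i x
        + S.indicator (fun _ => Real.log (1 + pmax * hmax / N i)) x := by
    intro i hik x _
    by_cases hxS : x ∈ S
    · rw [Set.indicator_of_mem hxS]
      have h1 : itg h N p i x ≤ Real.log (1 + pmax * hmax / N i) :=
        itg_le hnn hN hpnn hhbd i (fun y => hpbd i y) x
      have h2 : 0 ≤ itg h N q i x := itg_nonneg hnn hN hqnn i x
      linarith
    · rw [Set.indicator_of_notMem hxS]
      have hqeq : ∀ j, q j x = p j x := by
        intro j
        by_cases hjk : j = k
        · subst hjk; rw [hqk, hind, Set.indicator_of_notMem hxS]; ring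
        · rw [hq_ne j hjk]
      rw [itg, itg]
      simp only [hqeq]
      simp
  -- integrability of all integrands
  have hitgp : ∀ i, IntegrableOn (itg h N p i) E :=
    fun i => itg_integrableOn hmeas hnn hN hpmeas hpnn hhbd i (fun x => hpbd i x)
  have hitgq : ∀ i, IntegrableOn (itg h N q i) E :=
    fun i => itg_integrableOn hmeas hnn hN hqmeas hqnn hhbd i (fun x => hqbd i x)
  -- gain for user k
  have hgain : capacity W h N p k + g * m ≤ capacity W h N q k := by
    rw [capacity_eq hW0, capacity_eq hW0]
    have hint : (∫ x in E, itg h N p k x) + (∫ x in E, S.indicator (fun _ => g) x)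
        ≤ ∫ x in E, itg h N q k x := by
      rw [← integral_add (hitgp k) (hindcInt g)]
      exact setIntegral_mono_on ((hitgp k).add (hindcInt g)) (hitgq k)
        measurableSet_Ioc hptk
    rw [hindVal g] at hint
    exact hint
  -- loss bound for other users
  have hloss : ∀ i, i ≠ k →
      capacity W h N p i ≤ capacity W h N q i + Real.log (1 + pmax * hmax / N i) * m := by
    intro i hik
    rw [capacity_eq hW0, capacity_eq hW0]
    have hint : (∫ x in E, itg h N p i x)
        ≤ ∫ x in E, (itg h N q i x + S.indicator (fun _ => Real.log (1 + pmax * hmax / N i)) x) := by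
      exact setIntegral_mono_on (hitgp i)
        ((hitgq i).add (hindcInt _)) measurableSet_Ioc (hpti i hik)
    rw [integral_add (hitgq i) (hindcInt _), hindVal] at hint
    exact hint
  -- assemble
  refine ⟨q, hqmeas, hqnn, hfeasq, ?_⟩
  have hsplit : ∀ r : Fin n → ℝ → ℝ,
      ∑ i, ω i * capacity W h N r i
        = ω k * capacity W h N r k
          + ∑ i ∈ Finset.univ.erase k, ω i * capacity W h N r i :=
    fun r => (Finset.add_sum_erase _ _ (Finset.mem_univ k)).symm
  rw [gt_iff_lt, hsplit p, hsplit q]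
  have h2 : ∑ i ∈ Finset.univ.erase k, (ω i * capacity W h N p i
        - (ω i * Real.log (1 + pmax * hmax / N i)) * m)
      ≤ ∑ i ∈ Finset.univ.erase k, ω i * capacity W h N q i := by
    apply Finset.sum_le_sum
    intro i hi
    have hik : i ≠ k := Finset.ne_of_mem_erase hi
    have h5 := mul_le_mul_of_nonneg_left (hloss i hik) (hω i).le
    rw [mul_add, ← mul_assoc] at h5
    linarith
  have h3 : ∑ i ∈ Finset.univ.erase k, (ω i * capacity W h N p i
        - (ω i * Real.log (1 + pmax * hmax / N i)) * m)
      = (∑ i ∈ Finset.univ.erase k, ω i * capacity W h N p i) - L * m := by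
    rw [Finset.sum_sub_distrib, ← Finset.sum_mul, hL]
  rw [h3] at h2
  have h4 : ω k * capacity W h N p k + (ω k * g) * m ≤ ω k * capacity W h N q k := by
    have h5 := mul_le_mul_of_nonneg_left hgain (hω k).le
    rw [mul_add, ← mul_assoc] at h5
    linarith
  have h6 : 0 < (ω k * g - L) * m := mul_pos (by linarith) hm0
  have h7 : (ω k * g - L) * m = (ω k * g) * m - L * m := by ring
  linarith
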